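/- With ℙ the projector from the decomposition of symmetric tensors on null metric hypersurface data (dimension n ≥ 2): (i) ℙ(V) = 0 for all V in the kernel K₀ of τ; (ii) ℙ(γ) = γ; (iii) ℙ(ℓ⊗_sω) = ℓ⊗_sω for any covector ω; (iv) if ω₁, ω₂ are covectors with ω₁(n) = ω₂(n) = 0, then ℙ(ω₁⊗_sω₂) = (P(ω₁,ω₂)/(n−1))γ. Consequently I − ℙ is a projector with range K₀ restricting to the identity on K₀. -/

import Mathlib

set_option maxHeartbeats 1000000


open Module LinearMap

variable {V : Type*} [AddCommGroup V] [Module ℝ V] [FiniteDimensional ℝ V]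

/-- The trace `P^{ab} W_{ab}`. -/
noncomputable def trP (P : Dual ℝ V →ₗ[ℝ] V) (W : V →ₗ[ℝ] Dual ℝ V) : ℝ :=
  LinearMap.trace ℝ V (P ∘ₗ W)

/-- The projector `ℙ`. -/
noncomputable def proj (γ : V →ₗ[ℝ] Dual ℝ V) (ℓ : Dual ℝ V) (l2 : ℝ) (n : V)
    (P : Dual ℝ V →ₗ[ℝ] V) (𝔫 : ℕ) (W : V →ₗ[ℝ] Dual ℝ V) : V →ₗ[ℝ] Dual ℝ V :=
  ℓ.smulRight (W n - W n n • ℓ) + (W n - W n n • ℓ).smulRight ℓ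
    + W n n • (ℓ.smulRight ℓ + (l2 / ((𝔫 : ℝ) - 1)) • γ)
    + (trP P W / ((𝔫 : ℝ) - 1)) • γ

lemma trace_scalar (g : ℝ →ₗ[ℝ] ℝ) : LinearMap.trace ℝ ℝ g = g 1 := by
  have h : g = (g 1) • (1 : ℝ →ₗ[ℝ] ℝ) := by
    ext x
    simp [mul_comm]
  rw [h, map_smul, LinearMap.trace_one, finrank_self]
  simp

lemma trace_smulRight' (f : V →ₗ[ℝ] ℝ) (v : V) :
    LinearMap.trace ℝ V (f.smulRight v) = f v := by
  have h : f.smulRight v = (LinearMap.toSpanSingleton ℝ V v) ∘ₗ f := by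
    ext x; simp [LinearMap.toSpanSingleton]
  rw [h, LinearMap.trace_comp_comm', trace_scalar]
  simp [LinearMap.toSpanSingleton]

lemma trP_smulRight (P : Dual ℝ V →ₗ[ℝ] V) (f : Dual ℝ V) (ω : Dual ℝ V) :
    trP P (f.smulRight ω) = f (P ω) := by
  have h : P ∘ₗ (f.smulRight ω) = f.smulRight (P ω) := by
    ext x; simp
  rw [trP, h, trace_smulRight']

lemma trP_add (P : Dual ℝ V →ₗ[ℝ] V) (A B : V →ₗ[ℝ] Dual ℝ V) :
    trP P (A + B) = trP P A + trP P B := by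
  simp [trP, LinearMap.comp_add]

lemma trP_sub (P : Dual ℝ V →ₗ[ℝ] V) (A B : V →ₗ[ℝ] Dual ℝ V) :
    trP P (A - B) = trP P A - trP P B := by
  simp [trP, LinearMap.comp_sub]

lemma trP_smul (P : Dual ℝ V →ₗ[ℝ] V) (a : ℝ) (A : V →ₗ[ℝ] Dual ℝ V) :
    trP P (a • A) = a * trP P A := by
  simp [trP, LinearMap.comp_smul]

/-- Properties of the projector `ℙ`: it kills the kernel `K₀` of `τ`, fixes `γ` and
`ℓ⊗ₛω`, maps `ω₁⊗ₛω₂` (with `ω₁(n)=ω₂(n)=0`) to `(P(ω₁,ω₂)/(𝔫-1))γ`; consequently `I - ℙ`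
is a projector with range `K₀` restricting to the identity on `K₀`. -/
theorem proj_properties
    (γ : V →ₗ[ℝ] Dual ℝ V) (ℓ : Dual ℝ V) (l2 : ℝ) (n : V) (P : Dual ℝ V →ₗ[ℝ] V)
    (𝔫 : ℕ) (hdim : finrank ℝ V = 𝔫) (h𝔫 : 2 ≤ 𝔫)
    (hγsym : ∀ x y, γ x y = γ y x)
    (hγn : γ n = 0)
    (hℓn : ℓ n = 1)
    (hPsym : ∀ ω χ : Dual ℝ V, ω (P χ) = χ (P ω))
    (hPℓ : P ℓ + l2 • n = 0)
    (hPγ : ∀ x : V, P (γ x) + ℓ x • n = x) :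
    -- (i) ℙ vanishes on the kernel K₀
    (∀ W : V →ₗ[ℝ] Dual ℝ V, W n = 0 → trP P W = 0 → proj γ ℓ l2 n P 𝔫 W = 0) ∧
    -- (ii) ℙ(γ) = γ
    proj γ ℓ l2 n P 𝔫 γ = γ ∧
    -- (iii) ℙ(ℓ⊗ₛω) = ℓ⊗ₛω for any covector ω
    (∀ ω : Dual ℝ V,
      proj γ ℓ l2 n P 𝔫 ((1 / 2 : ℝ) • (ℓ.smulRight ω + ω.smulRight ℓ))
        = (1 / 2 : ℝ) • (ℓ.smulRight ω + ω.smulRight ℓ)) ∧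
    -- (iv) ℙ(ω₁⊗ₛω₂) = (P(ω₁,ω₂)/(𝔫-1)) γ when ω₁(n) = ω₂(n) = 0
    (∀ ω₁ ω₂ : Dual ℝ V, ω₁ n = 0 → ω₂ n = 0 →
      proj γ ℓ l2 n P 𝔫 ((1 / 2 : ℝ) • (ω₁.smulRight ω₂ + ω₂.smulRight ω₁))
        = (ω₂ (P ω₁) / ((𝔫 : ℝ) - 1)) • γ) ∧
    -- I - ℙ is a projector ...
    (∀ W : V →ₗ[ℝ] Dual ℝ V,
      (W - proj γ ℓ l2 n P 𝔫 W) - proj γ ℓ l2 n P 𝔫 (W - proj γ ℓ l2 n P 𝔫 W)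
        = W - proj γ ℓ l2 n P 𝔫 W) ∧
    -- ... with range contained in K₀ ...
    (∀ W : V →ₗ[ℝ] Dual ℝ V,
      (W - proj γ ℓ l2 n P 𝔫 W) n = 0 ∧ trP P (W - proj γ ℓ l2 n P 𝔫 W) = 0) ∧
    -- ... restricting to the identity on K₀
    (∀ W : V →ₗ[ℝ] Dual ℝ V, W n = 0 → trP P W = 0 → W - proj γ ℓ l2 n P 𝔫 W = W) := by
  have hne : ((𝔫 : ℝ) - 1) ≠ 0 := by
    have : (2 : ℝ) ≤ (𝔫 : ℝ) := by exact_mod_cast h𝔫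
    linarith
  have hPℓ' : P ℓ = -(l2 • n) := eq_neg_of_add_eq_zero_left hPℓ
  have hℓPℓ : ℓ (P ℓ) = -l2 := by rw [hPℓ']; simp [hℓn]
  have hPγ' : ∀ x, P (γ x) = x - ℓ x • n := fun x => eq_sub_of_add_eq (hPγ x)
  have htrγ : trP P γ = (𝔫 : ℝ) - 1 := by
    have h : P ∘ₗ γ = LinearMap.id - ℓ.smulRight n := by
      ext x; simp [hPγ' x]
    rw [trP, h, map_sub, LinearMap.trace_id, trace_smulRight', hℓn, hdim]
  -- (i)
  have part1 : ∀ W : V →ₗ[ℝ] Dual ℝ V, W n = 0 → trP P W = 0 →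
      proj γ ℓ l2 n P 𝔫 W = 0 := by
    intro W h1 h2
    simp [_root_.proj, h1, h2]
  -- (ii)
  have part2 : proj γ ℓ l2 n P 𝔫 γ = γ := by
    simp [_root_.proj, hγn, htrγ, div_self hne]
  -- (iii)
  have part3 : ∀ ω : Dual ℝ V,
      proj γ ℓ l2 n P 𝔫 ((1 / 2 : ℝ) • (ℓ.smulRight ω + ω.smulRight ℓ))
        = (1 / 2 : ℝ) • (ℓ.smulRight ω + ω.smulRight ℓ) := by
    intro ω
    have htr : trP P ((1 / 2 : ℝ) • (ℓ.smulRight ω + ω.smulRight ℓ)) = -(l2 * ω n) := by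
      rw [trP_smul, trP_add, trP_smulRight, trP_smulRight, hPsym ℓ ω, hPℓ']
      simp
      ring
    ext x y
    simp only [_root_.proj, LinearMap.add_apply, LinearMap.smul_apply,
      LinearMap.smulRight_apply, LinearMap.sub_apply, smul_eq_mul, htr, hℓn]
    field_simp
    ring
  -- (iv)
  have part4 : ∀ ω₁ ω₂ : Dual ℝ V, ω₁ n = 0 → ω₂ n = 0 →
      proj γ ℓ l2 n P 𝔫 ((1 / 2 : ℝ) • (ω₁.smulRight ω₂ + ω₂.smulRight ω₁))
        = (ω₂ (P ω₁) / ((𝔫 : ℝ) - 1)) • γ := by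
    intro ω₁ ω₂ h1 h2
    have htr : trP P ((1 / 2 : ℝ) • (ω₁.smulRight ω₂ + ω₂.smulRight ω₁)) = ω₂ (P ω₁) := by
      rw [trP_smul, trP_add, trP_smulRight, trP_smulRight, hPsym ω₁ ω₂]
      ring
    ext x y
    simp only [_root_.proj, LinearMap.add_apply, LinearMap.smul_apply,
      LinearMap.smulRight_apply, LinearMap.sub_apply, smul_eq_mul, htr, h1, h2]
    field_simp
    ring
  -- projection preserves value at n
  have hprojn : ∀ W : V →ₗ[ℝ] Dual ℝ V, (proj γ ℓ l2 n P 𝔫 W) n = W n := by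
    intro W
    ext y
    simp [_root_.proj, hℓn, hγn]
  -- projection preserves the trace
  have htrproj : ∀ W : V →ₗ[ℝ] Dual ℝ V,
      trP P (proj γ ℓ l2 n P 𝔫 W) = trP P W := by
    intro W
    have hu1 : (W n - W n n • ℓ) (P ℓ) = 0 := by
      simp [hPℓ', hℓn]
      ring
    have hu2 : ℓ (P (W n - W n n • ℓ)) = 0 := by
      rw [hPsym ℓ _]; exact hu1
    simp only [_root_.proj]
    rw [trP_add, trP_add, trP_add, trP_smul, trP_smul, trP_add, trP_smul,
      trP_smulRight, trP_smulRight, trP_smulRight, htrγ, hu1, hu2, hℓPℓ]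
    field_simp
    ring
  -- (vi)
  have part6 : ∀ W : V →ₗ[ℝ] Dual ℝ V,
      (W - proj γ ℓ l2 n P 𝔫 W) n = 0 ∧ trP P (W - proj γ ℓ l2 n P 𝔫 W) = 0 := by
    intro W
    constructor
    · simp [LinearMap.sub_apply, hprojn W]
    · rw [trP_sub, htrproj]; ring
  -- (v)
  have part5 : ∀ W : V →ₗ[ℝ] Dual ℝ V,
      (W - proj γ ℓ l2 n P 𝔫 W) - proj γ ℓ l2 n P 𝔫 (W - proj γ ℓ l2 n P 𝔫 W)
        = W - proj γ ℓ l2 n P 𝔫 W := by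
    intro W
    obtain ⟨h1, h2⟩ := part6 W
    rw [part1 _ h1 h2]; ext x y; simp
  -- (vii)
  have part7 : ∀ W : V →ₗ[ℝ] Dual ℝ V, W n = 0 → trP P W = 0 →
      W - proj γ ℓ l2 n P 𝔫 W = W := by
    intro W h1 h2
    rw [part1 _ h1 h2]; ext x y; simp
  exact ⟨part1, part2, part3, part4, part5, part6, part7⟩
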